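/- Let M > 1, q > 0 and n > -2 be real numbers, and let C = {s ∈ ℝ : |s - (n - s)| ≤ q, 0 ≤ s + 1 ≤ M, and 0 ≤ n + 1 - s ≤ M}. Then ∫_C C(M-1, s)·C(M-1, n-s) ds ≥ ∫_C C(M, s+1)·C(M-2, n-s-1) ds. -/
import Mathlib


open Real MeasureTheory Set

/-- Generalized binomial coefficient `C(M,s) = Γ(M+1)/(Γ(s+1)·Γ(M-s+1))`. -/
noncomputable def genBinom (M s : ℝ) : ℝ :=
  Real.Gamma (M + 1) / (Real.Gamma (s + 1) * Real.Gamma (M - s + 1))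

private lemma Ginv_step (x : ℝ) : (Real.Gamma x)⁻¹ = x * (Real.Gamma (x + 1))⁻¹ := by
  rcases eq_or_ne x 0 with rfl | hx
  · simp [Real.Gamma_zero]
  · rw [Real.Gamma_add_one hx, mul_inv, ← mul_assoc, mul_inv_cancel₀ hx, one_mul]

private lemma Ginv_step' (x y : ℝ) (h : x + 1 = y) :
    (Real.Gamma x)⁻¹ = x * (Real.Gamma y)⁻¹ := by
  subst h; exact Ginv_step x

private lemma continuous_Ginv : Continuous fun x : ℝ => (Real.Gamma x)⁻¹ := by
  have h : ∀ x : ℝ, (Real.Gamma x)⁻¹ = ((Complex.Gamma (x : ℂ))⁻¹).re := by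
    intro x
    rw [Complex.Gamma_ofReal, ← Complex.ofReal_inv, Complex.ofReal_re]
  simp only [h]
  exact Complex.continuous_re.comp
    ((Complex.differentiable_one_div_Gamma.continuous).comp Complex.continuous_ofReal)

private lemma genBinom_eq (M s : ℝ) :
    genBinom M s = Real.Gamma (M + 1) * (Real.Gamma (s + 1))⁻¹ * (Real.Gamma (M - s + 1))⁻¹ := by
  rw [genBinom, div_eq_mul_inv, mul_inv, ← mul_assoc]

private lemma continuous_genBinom (M : ℝ) : Continuous fun s => genBinom M s := by
  simp only [genBinom_eq]
  refine (continuous_const.mul ?_).mul ?_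
  · exact continuous_Ginv.comp (continuous_add_right 1)
  · exact continuous_Ginv.comp ((continuous_const.sub continuous_id).add continuous_const)

/-- auxiliary telescoping function -/
private noncomputable def Fl (M n : ℝ) (s : ℝ) : ℝ :=
  genBinom (M - 1) s * genBinom (M - 2) (n - s)

private lemma continuous_Fl (M n : ℝ) : Continuous (Fl M n) := by
  unfold Fl
  exact (continuous_genBinom (M - 1)).mul
    ((continuous_genBinom (M - 2)).comp (continuous_const.sub continuous_id))

private lemma GammaM (M : ℝ) (hM : 1 < M) :
    Real.Gamma M = (M - 1) * Real.Gamma (M - 1) := by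
  have h := Real.Gamma_add_one (s := M - 1) (by intro h; rw [sub_eq_zero] at h; linarith)
  rw [show M - 1 + 1 = M from by ring] at h
  exact h

private lemma GammaM1 (M : ℝ) (hM : 1 < M) :
    Real.Gamma (M + 1) = M * ((M - 1) * Real.Gamma (M - 1)) := by
  have h := Real.Gamma_add_one (s := M) (by intro h; linarith [h])
  rw [GammaM M hM] at h
  exact h

/-- Pascal-rule telescoping identity. -/
private lemma key1 (M n : ℝ) (hM : 1 < M) (s : ℝ) :
    genBinom (M - 1) s * genBinom (M - 1) (n - s)
      - genBinom M (s + 1) * genBinom (M - 2) (n - s - 1)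
      = Fl M n s - Fl M n (s + 1) := by
  unfold Fl
  rw [genBinom_eq (M - 1) s, genBinom_eq (M - 1) (n - s), genBinom_eq M (s + 1),
    genBinom_eq (M - 2) (n - s - 1), genBinom_eq (M - 1) (s + 1),
    genBinom_eq (M - 2) (n - (s + 1)), genBinom_eq (M - 2) (n - s)]
  rw [show M - 1 + 1 = M from by ring]
  rw [show M - 2 + 1 = M - 1 from by ring]
  rw [show M - 1 - s + 1 = M - s from by ring]
  rw [show M - (s + 1) + 1 = M - s from by ring]
  rw [show M - 1 - (n - s) + 1 = M - n + s from by ring]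
  rw [show M - 2 - (n - s - 1) + 1 = M - n + s from by ring]
  rw [show M - 1 - (s + 1) + 1 = M - s - 1 from by ring]
  rw [show M - 2 - (n - (s + 1)) + 1 = M - n + s from by ring]
  rw [show n - (s + 1) + 1 = n - s from by ring]
  rw [show n - s - 1 + 1 = n - s from by ring]
  rw [show M - 2 - (n - s) + 1 = M - n + s - 1 from by ring]
  rw [show s + 1 + 1 = s + 2 from by ring]
  rw [GammaM1 M hM, GammaM M hM]
  rw [Ginv_step' (s + 1) (s + 2) (by ring)]
  rw [Ginv_step' (n - s) (n - s + 1) (by ring)]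
  rw [Ginv_step' (M - n + s - 1) (M - n + s) (by ring)]
  rw [Ginv_step' (M - s - 1) (M - s) (by ring)]
  ring

/-- Reflection identity exhibiting the sign structure. -/
private lemma key2 (M n : ℝ) (hM : 1 < M) (s : ℝ) :
    Fl M n s - Fl M n (n + 1 - s)
      = (M - 1) * Real.Gamma (M - 1) * Real.Gamma (M - 1)
          * ((M - n + s - 1) * (n + 1 - 2 * s))
          * ((Real.Gamma (s + 1))⁻¹ * (Real.Gamma (M - s))⁻¹
            * (Real.Gamma (n - s + 2))⁻¹ * (Real.Gamma (M - n + s))⁻¹) := by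
  unfold Fl
  rw [genBinom_eq (M - 1) s, genBinom_eq (M - 2) (n - s), genBinom_eq (M - 1) (n + 1 - s),
    genBinom_eq (M - 2) (n - (n + 1 - s))]
  rw [show M - 1 + 1 = M from by ring]
  rw [show M - 2 + 1 = M - 1 from by ring]
  rw [show M - 1 - s + 1 = M - s from by ring]
  rw [show M - 2 - (n - s) + 1 = M - n + s - 1 from by ring]
  rw [show n + 1 - s + 1 = n - s + 2 from by ring]
  rw [show M - 1 - (n + 1 - s) + 1 = M - n + s - 1 from by ring]
  rw [show n - (n + 1 - s) + 1 = s from by ring]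
  rw [show M - 2 - (n - (n + 1 - s)) + 1 = M - s from by ring]
  rw [GammaM M hM]
  rw [Ginv_step' (n - s + 1) (n - s + 2) (by ring)]
  rw [Ginv_step' (M - n + s - 1) (M - n + s) (by ring)]
  rw [Ginv_step' s (s + 1) (by ring)]
  ring

theorem genBinom_integral_ineq_C
    (M q n : ℝ) (hM : 1 < M) (hq : 0 < q) (hn : -2 < n)
    (C : Set ℝ)
    (hC : C = {s : ℝ | |s - (n - s)| ≤ q ∧ 0 ≤ s + 1 ∧ s + 1 ≤ M ∧
      0 ≤ n + 1 - s ∧ n + 1 - s ≤ M}) :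
    (∫ s in C, genBinom M (s + 1) * genBinom (M - 2) (n - s - 1)) ≤
      ∫ s in C, genBinom (M - 1) s * genBinom (M - 1) (n - s) := by
  set c := max (max ((n - q) / 2) (-1)) (n + 1 - M) with hc
  have hCeq : C = Icc c (n - c) := by
    rw [hC]
    ext s
    simp only [mem_setOf_eq, mem_Icc, abs_le]
    constructor
    · rintro ⟨⟨h1, h2⟩, h3, h4, h5, h6⟩
      constructor
      · rw [hc]
        exact max_le (max_le (by linarith) (by linarith)) (by linarith)
      · have h7 : c ≤ n - s := by
          rw [hc]
          exact max_le (max_le (by linarith) (by linarith)) (by linarith)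
        linarith
    · rintro ⟨h1, h2⟩
      have l1 : (n - q) / 2 ≤ c := by rw [hc]; exact le_max_of_le_left (le_max_left _ _)
      have l2 : (-1 : ℝ) ≤ c := by rw [hc]; exact le_max_of_le_left (le_max_right _ _)
      have l3 : n + 1 - M ≤ c := by rw [hc]; exact le_max_right _ _
      exact ⟨⟨by linarith, by linarith⟩, by linarith, by linarith, by linarith, by linarith⟩
  rcases le_or_gt c (n - c) with hce | hce
  · -- nonempty case
    have hc1 : (-1 : ℝ) ≤ c := by rw [hc]; exact le_max_of_le_left (le_max_right _ _)
    have hc2 : n + 1 - M ≤ c := by rw [hc]; exact le_max_right _ _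
    have hnM : n ≤ 2 * M - 2 := by linarith
    have hFlC := continuous_Fl M n
    have hFlI : ∀ a b : ℝ, IntervalIntegrable (Fl M n) volume a b := fun a b =>
      hFlC.intervalIntegrable a b
    have hgC : Continuous fun s => genBinom (M - 1) s * genBinom (M - 1) (n - s) :=
      (continuous_genBinom (M - 1)).mul
        ((continuous_genBinom (M - 1)).comp (continuous_const.sub continuous_id))
    have hfC : Continuous fun s => genBinom M (s + 1) * genBinom (M - 2) (n - s - 1) :=
      ((continuous_genBinom M).comp (continuous_add_right 1)).mul
        ((continuous_genBinom (M - 2)).comp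
          ((continuous_const.sub continuous_id).sub continuous_const))
    have hreflC : Continuous fun s => Fl M n (n + 1 - s) :=
      hFlC.comp (continuous_const.sub continuous_id)
    have hshiftC : Continuous fun s : ℝ => Fl M n (s + 1) :=
      hFlC.comp (continuous_add_right 1)
    -- pointwise nonnegativity of the reflected difference up to (n+1)/2
    have hpos : ∀ d : ℝ, d ≤ (n + 1) / 2 → ∀ s ∈ Icc c d, 0 ≤ Fl M n s - Fl M n (n + 1 - s) := by
      intro d hd s hs
      obtain ⟨hs1, hs2⟩ := hs
      rw [key2 M n hM s]
      have hA : (0 : ℝ) ≤ Real.Gamma (M - 1) := (Real.Gamma_pos_of_pos (by linarith)).le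
      have h1 : (0 : ℝ) ≤ M - n + s - 1 := by linarith
      have h2 : (0 : ℝ) ≤ n + 1 - 2 * s := by linarith
      have g1 : (0 : ℝ) ≤ (Real.Gamma (s + 1))⁻¹ :=
        inv_nonneg.mpr (Real.Gamma_nonneg_of_nonneg (by linarith))
      have g2 : (0 : ℝ) ≤ (Real.Gamma (M - s))⁻¹ :=
        inv_nonneg.mpr (Real.Gamma_nonneg_of_nonneg (by linarith))
      have g3 : (0 : ℝ) ≤ (Real.Gamma (n - s + 2))⁻¹ :=
        inv_nonneg.mpr (Real.Gamma_nonneg_of_nonneg (by linarith))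
      have g4 : (0 : ℝ) ≤ (Real.Gamma (M - n + s))⁻¹ :=
        inv_nonneg.mpr (Real.Gamma_nonneg_of_nonneg (by linarith))
      exact mul_nonneg
        (mul_nonneg (mul_nonneg (mul_nonneg (by linarith) hA) hA) (mul_nonneg h1 h2))
        (mul_nonneg (mul_nonneg (mul_nonneg g1 g2) g3) g4)
    rw [hCeq, MeasureTheory.integral_Icc_eq_integral_Ioc,
      MeasureTheory.integral_Icc_eq_integral_Ioc,
      ← intervalIntegral.integral_of_le hce, ← intervalIntegral.integral_of_le hce,
      ← sub_nonneg,
      ← intervalIntegral.integral_sub (hgC.intervalIntegrable _ _) (hfC.intervalIntegrable _ _)]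
    simp only [key1 M n hM]
    rw [intervalIntegral.integral_sub (hFlI _ _) (hshiftC.intervalIntegrable _ _)]
    rw [intervalIntegral.integral_comp_add_right (Fl M n) 1]
    have hsplit1 : (∫ s in c..(n - c), Fl M n s) + ∫ s in (n - c)..(n - c + 1), Fl M n s
        = ∫ s in c..(n - c + 1), Fl M n s :=
      intervalIntegral.integral_add_adjacent_intervals (hFlI _ _) (hFlI _ _)
    have hsplit2 : (∫ s in c..(c + 1), Fl M n s) + ∫ s in (c + 1)..(n - c + 1), Fl M n s
        = ∫ s in c..(n - c + 1), Fl M n s :=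
      intervalIntegral.integral_add_adjacent_intervals (hFlI _ _) (hFlI _ _)
    have hrefl : (∫ s in c..(c + 1), Fl M n (n + 1 - s))
        = ∫ s in (n - c)..(n - c + 1), Fl M n s := by
      rw [intervalIntegral.integral_comp_sub_left (Fl M n) (n + 1),
        show n + 1 - (c + 1) = n - c from by ring,
        show n + 1 - c = n - c + 1 from by ring]
    have hmain : (0 : ℝ) ≤ ∫ s in c..(c + 1), (Fl M n s - Fl M n (n + 1 - s)) := by
      rcases le_or_gt (c + 1) ((n + 1) / 2) with hcase | hcase
      · exact intervalIntegral.integral_nonneg (by linarith) (hpos (c + 1) hcase)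
      · have hsplit : (∫ s in c..(n - c), (Fl M n s - Fl M n (n + 1 - s)))
            + ∫ s in (n - c)..(c + 1), (Fl M n s - Fl M n (n + 1 - s))
            = ∫ s in c..(c + 1), (Fl M n s - Fl M n (n + 1 - s)) :=
          intervalIntegral.integral_add_adjacent_intervals
            ((hFlC.sub hreflC).intervalIntegrable _ _)
            ((hFlC.sub hreflC).intervalIntegrable _ _)
        have hzero : (∫ s in (n - c)..(c + 1), (Fl M n s - Fl M n (n + 1 - s))) = 0 := by
          rw [intervalIntegral.integral_sub (hFlI _ _) (hreflC.intervalIntegrable _ _),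
            intervalIntegral.integral_comp_sub_left (Fl M n) (n + 1),
            show n + 1 - (c + 1) = n - c from by ring,
            show n + 1 - (n - c) = c + 1 from by ring, sub_self]
        have hpos' : (0 : ℝ) ≤ ∫ s in c..(n - c), (Fl M n s - Fl M n (n + 1 - s)) :=
          intervalIntegral.integral_nonneg hce (hpos (n - c) (by linarith))
        linarith
    rw [intervalIntegral.integral_sub (hFlI _ _) (hreflC.intervalIntegrable _ _)] at hmain
    linarith [hmain, hsplit1, hsplit2, hrefl]
  · -- empty case
    rw [hCeq, Set.Icc_eq_empty (not_le.mpr hce)]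
    simp
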